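/- Let $M$ be the standard Gaussian density on $\mathbb{R}^n$, $n \ge 1$, and let $f(x) = |x|^2$. Then for every $R > 0$ and every $\epsilon \le 2$, $\int (\cosh(\epsilon^{-1} f(x) \mathbf{1}_{|x|>R}) - 1)\, M(x)\,dx = +\infty$. In particular, the truncated tails $f_R = f\,\mathbf{1}_{|x|>R}$ do not converge to $0$ in the Luxemburg norm of $L^{(\cosh-1)}(M)$ as $R \to \infty$, even though $f \in L^{(\cosh-1)}(M)$. -/

import Mathlib

open MeasureTheory Real Filter Topology
open scoped ENNReal

private lemma integrable_gauss (n : ℕ) {b : ℝ} (hb : 0 < b) :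
    Integrable (fun x : EuclideanSpace ℝ (Fin n) => Real.exp (-b * ‖x‖ ^ 2)) := by
  have h := (GaussianFourier.integrable_cexp_neg_mul_sq_norm_add (V := EuclideanSpace ℝ (Fin n))
      (b := (b : ℂ)) (by simpa using hb) 0 0).norm
  convert h using 2 with x
  simp [Complex.norm_exp, ← Complex.ofReal_pow]

private lemma pointA {ρ t C : ℝ} (hρ0 : 0 < ρ) (hρ : ρ ≤ 1/4) (ht : 0 ≤ t) (hC : 0 < C) :
    (Real.cosh (ρ * t) - 1) * (C * Real.exp (-t / 2)) ≤ 8 * ρ * C * Real.exp (-(1/8) * t) := by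
  set A := Real.exp (t/8) with hA
  have hA1 : 1 ≤ A := Real.one_le_exp (by positivity)
  have hA0 : 0 < A := lt_of_lt_of_le one_pos hA1
  have ht8 : t ≤ 8 * A := by nlinarith [Real.add_one_le_exp (t/8)]
  have hEF : Real.exp (-(ρ*t)) * Real.exp (ρ*t) = 1 := by rw [← Real.exp_add]; simp
  have hcosh : Real.cosh (ρ*t) - 1 ≤ (ρ*t) * Real.exp (ρ*t) := by
    have h2 := Real.add_one_le_exp (-(ρ*t))
    have h4 : Real.cosh (ρ*t) ≤ Real.exp (ρ*t) := by
      rw [Real.cosh_eq]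
      have : Real.exp (-(ρ*t)) ≤ Real.exp (ρ*t) := Real.exp_le_exp.2 (by nlinarith)
      linarith
    nlinarith [Real.exp_pos (ρ*t)]
  have hE2 : Real.exp (ρ*t) ≤ A * A := by
    have : A * A = Real.exp (t/4) := by rw [hA, ← Real.exp_add]; ring_nf
    rw [this]
    exact Real.exp_le_exp.2 (by nlinarith)
  have hexpneg : Real.exp (-t/2) * (A*A*A*A) = 1 := by
    rw [hA, ← Real.exp_add, ← Real.exp_add, ← Real.exp_add, ← Real.exp_add,
      Real.exp_eq_one_iff]
    ring
  have hexp8 : Real.exp (-(1/8)*t) * A = 1 := by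
    rw [hA, ← Real.exp_add, Real.exp_eq_one_iff]; ring
  have h6 : Real.cosh (ρ*t) - 1 ≤ 8*ρ*(A*A*A) := by
    have h5 : (ρ*t) * Real.exp (ρ*t) ≤ (ρ*t) * (A*A) :=
      mul_le_mul_of_nonneg_left hE2 (by positivity)
    have h7 : (ρ*t) * (A*A) ≤ ρ*(8*A)*(A*A) := by nlinarith [mul_nonneg (sq_nonneg A) hρ0.le]
    nlinarith
  -- now conclude
  have hEneg : Real.exp (-t/2) = 1 / (A*A*A*A) := by
    field_simp at hexpneg ⊢; linarith
  have hE8 : Real.exp (-(1/8)*t) = 1 / A := by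
    field_simp at hexp8 ⊢; linarith
  have hcnn : 0 ≤ Real.cosh (ρ*t) - 1 := by linarith [Real.one_le_cosh (ρ*t)]
  have key : (Real.cosh (ρ*t) - 1) * C * A ≤ 8*ρ*C * (A*A*A*A) := by
    nlinarith [mul_le_mul_of_nonneg_right h6 (show (0:ℝ) ≤ C * A by positivity)]
  rw [hEneg, hE8]
  calc (Real.cosh (ρ*t) - 1) * (C * (1/(A*A*A*A)))
      = ((Real.cosh (ρ*t) - 1)*C*A)/(A*A*A*A*A) := by field_simp
    _ ≤ (8*ρ*C*(A*A*A*A))/(A*A*A*A*A) := by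
        exact (div_le_div_iff_of_pos_right (by positivity)).2 key
    _ = 8*ρ*C*(1/A) := by field_simp


private lemma pointB {ε t C : ℝ} (hε : 0 < ε) (hε2 : ε ≤ 2) (ht : 4 ≤ t) (hC : 0 < C) :
    C / 4 ≤ (Real.cosh (ε⁻¹ * t) - 1) * (C * Real.exp (-t / 2)) := by
  have hinv : (2:ℝ)⁻¹ ≤ ε⁻¹ := by
    rw [inv_le_inv₀ (by norm_num) hε]; exact hε2
  have h1 : Real.exp (t/2) / 2 ≤ Real.cosh (ε⁻¹ * t) := by
    have h0 : t/2 ≤ ε⁻¹ * t := by nlinarith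
    have := Real.exp_le_exp.2 h0
    rw [Real.cosh_eq]
    have := Real.exp_pos (-(ε⁻¹ * t))
    linarith
  have hEF : Real.exp (-t/2) * Real.exp (t/2) = 1 := by
    rw [← Real.exp_add, Real.exp_eq_one_iff]; ring
  have h3 : (4:ℝ) ≤ Real.exp (t/2) := by
    have he : (2:ℝ) ≤ Real.exp 1 := by nlinarith [Real.add_one_le_exp 1]
    have h4 : Real.exp 2 ≤ Real.exp (t/2) := Real.exp_le_exp.2 (by linarith)
    have h5 : Real.exp 2 = Real.exp 1 * Real.exp 1 := by
      rw [← Real.exp_add]; norm_num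
    nlinarith
  have h2 : Real.exp (-t/2) ≤ 1/4 := by
    nlinarith [Real.exp_pos (-t/2)]
  nlinarith [Real.exp_pos (-t/2), mul_le_mul_of_nonneg_right
      (show Real.exp (t/2)/2 - 1 ≤ Real.cosh (ε⁻¹ * t) - 1 by linarith)
      (show (0:ℝ) ≤ C * Real.exp (-t/2) by positivity)]

noncomputable def gaussM (n : ℕ) (x : EuclideanSpace ℝ (Fin n)) : ℝ :=
  (2 * π) ^ (-(n : ℝ) / 2) * Real.exp (-‖x‖ ^ 2 / 2)

noncomputable def orliczInt (n : ℕ) (ρ : ℝ) (f : EuclideanSpace ℝ (Fin n) → ℝ) : ℝ≥0∞ :=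
  ∫⁻ x, ENNReal.ofReal (Real.cosh (ρ * f x) - 1) * ENNReal.ofReal (gaussM n x)

def MemLexp (n : ℕ) (f : EuclideanSpace ℝ (Fin n) → ℝ) : Prop :=
  ∃ ρ > 0, orliczInt n ρ f < ⊤

noncomputable def luxNorm (n : ℕ) (f : EuclideanSpace ℝ (Fin n) → ℝ) : ℝ :=
  sInf {c : ℝ | 0 < c ∧ orliczInt n (1 / c) f ≤ 1}

noncomputable def coshStar (y : ℝ) : ℝ := ⨆ u : ℝ, (u * y - (Real.cosh u - 1))

private lemma gaussM_nonneg (n : ℕ) (x : EuclideanSpace ℝ (Fin n)) : 0 ≤ gaussM n x := by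
  unfold gaussM
  have : (0:ℝ) < (2 * π) ^ (-(n : ℝ) / 2) := Real.rpow_pos_of_pos (by positivity) _
  positivity

private lemma partA (n : ℕ) :
    ∃ ρ : ℝ, 0 < ρ ∧ orliczInt n ρ (fun x => ‖x‖ ^ 2) ≤ 1 := by
  set C : ℝ := (2 * π) ^ (-(n : ℝ) / 2) with hCdef
  have hC : 0 < C := Real.rpow_pos_of_pos (by positivity) _
  have hint : Integrable (fun x : EuclideanSpace ℝ (Fin n) => Real.exp (-(1/8) * ‖x‖ ^ 2)) :=
    integrable_gauss n (by norm_num)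
  set V := ∫⁻ x : EuclideanSpace ℝ (Fin n), ENNReal.ofReal (Real.exp (-(1/8) * ‖x‖ ^ 2)) with hVdef
  have hV : V < ⊤ := hint.lintegral_lt_top
  have hVnn : 0 ≤ V.toReal := ENNReal.toReal_nonneg
  set ρ : ℝ := min (1/4) ((8 * C * (V.toReal + 1))⁻¹) with hρdef
  have hρ0 : 0 < ρ := lt_min (by norm_num) (by positivity)
  refine ⟨ρ, hρ0, ?_⟩
  have step1 : orliczInt n ρ (fun x => ‖x‖ ^ 2) ≤
      ∫⁻ x : EuclideanSpace ℝ (Fin n),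
        ENNReal.ofReal (8 * ρ * C) * ENNReal.ofReal (Real.exp (-(1/8) * ‖x‖ ^ 2)) := by
    rw [orliczInt]
    refine lintegral_mono fun x => ?_
    have hc : 0 ≤ Real.cosh (ρ * ‖x‖ ^ 2) - 1 := by linarith [Real.one_le_cosh (ρ * ‖x‖ ^ 2)]
    rw [← ENNReal.ofReal_mul hc, ← ENNReal.ofReal_mul (by positivity)]
    refine ENNReal.ofReal_le_ofReal ?_
    have := pointA hρ0 (min_le_left _ _) (by positivity : (0:ℝ) ≤ ‖x‖ ^ 2) hC
    simpa [gaussM, hCdef] using this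
  have step2 : (∫⁻ x : EuclideanSpace ℝ (Fin n),
        ENNReal.ofReal (8 * ρ * C) * ENNReal.ofReal (Real.exp (-(1/8) * ‖x‖ ^ 2)))
      = ENNReal.ofReal (8 * ρ * C) * V := by
    rw [hVdef]
    exact lintegral_const_mul' _ _ ENNReal.ofReal_ne_top
  have step3 : ENNReal.ofReal (8 * ρ * C) * V ≤ 1 := by
    have hρle : ρ ≤ (8 * C * (V.toReal + 1))⁻¹ := min_le_right _ _
    have hK : (0:ℝ) < 8 * C * (V.toReal + 1) := by positivity
    have hmul : 8 * ρ * C * V.toReal ≤ 1 := by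
      have h1 : 8 * ρ * C ≤ 8 * (8 * C * (V.toReal + 1))⁻¹ * C := by nlinarith
      have h2 : 8 * (8 * C * (V.toReal + 1))⁻¹ * C * V.toReal ≤ 1 := by
        have he : (8:ℝ) * (8 * C * (V.toReal + 1))⁻¹ * C * V.toReal =
            (8 * C * V.toReal) / (8 * C * (V.toReal + 1)) := by
          rw [div_eq_mul_inv]; ring
        rw [he, div_le_one hK]; nlinarith
      nlinarith
    calc ENNReal.ofReal (8 * ρ * C) * V
        = ENNReal.ofReal (8 * ρ * C) * ENNReal.ofReal V.toReal := by
          rw [ENNReal.ofReal_toReal hV.ne]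
      _ = ENNReal.ofReal (8 * ρ * C * V.toReal) := by
          rw [← ENNReal.ofReal_mul (by positivity)]
      _ ≤ 1 := by
          rw [← ENNReal.ofReal_one]; exact ENNReal.ofReal_le_ofReal hmul
  exact step1.trans (step2.trans_le step3)

private lemma partB (n : ℕ) (hn : 1 ≤ n) :
    ∀ R > 0, ∀ ε : ℝ, 0 < ε → ε ≤ 2 →
      (∫⁻ x, ENNReal.ofReal
          (Real.cosh (ε⁻¹ * (if R < ‖x‖ then ‖x‖ ^ 2 else 0)) - 1) *
          ENNReal.ofReal (gaussM n x)) = ⊤ := by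
  intro R hR ε hε hε2
  set C : ℝ := (2 * π) ^ (-(n : ℝ) / 2) with hCdef
  have hC : 0 < C := Real.rpow_pos_of_pos (by positivity) _
  set r : ℝ := max R 2 with hrdef
  set S : Set (EuclideanSpace ℝ (Fin n)) := (Metric.closedBall 0 r)ᶜ with hSdef
  have hSmeas : MeasurableSet S := measurableSet_closedBall.compl
  haveI : Nontrivial (EuclideanSpace ℝ (Fin n)) := by
    refine ⟨⟨EuclideanSpace.single ⟨0, hn⟩ (1:ℝ), 0, fun h => ?_⟩⟩
    have := congrArg (fun v : EuclideanSpace ℝ (Fin n) => v ⟨0, hn⟩) h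
    simp [EuclideanSpace.single_apply] at this
  have htop : volume S = ⊤ := by
    by_contra h
    have h1 : volume (Set.univ : Set (EuclideanSpace ℝ (Fin n))) ≤
        volume (Metric.closedBall (0 : EuclideanSpace ℝ (Fin n)) r) + volume S := by
      calc volume (Set.univ : Set (EuclideanSpace ℝ (Fin n)))
          = volume (Metric.closedBall (0 : EuclideanSpace ℝ (Fin n)) r ∪ S) := by
            rw [hSdef, Set.union_compl_self]
        _ ≤ _ := measure_union_le _ _
    rw [measure_univ_of_isAddLeftInvariant] at h1
    have h2 : volume (Metric.closedBall (0 : EuclideanSpace ℝ (Fin n)) r) + volume S < ⊤ :=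
      ENNReal.add_lt_top.2 ⟨measure_closedBall_lt_top, lt_top_iff_ne_top.2 h⟩
    exact absurd (top_le_iff.1 h1) h2.ne
  rw [← top_le_iff]
  calc (⊤:ℝ≥0∞) = ENNReal.ofReal (C/4) * volume S := by
        rw [htop, ENNReal.mul_top (by simp [ENNReal.ofReal_eq_zero]; positivity)]
    _ = ∫⁻ x, S.indicator (fun _ => ENNReal.ofReal (C/4)) x := by
        rw [lintegral_indicator hSmeas, setLIntegral_const, mul_comm]
    _ ≤ _ := by
        refine lintegral_mono fun x => ?_
        by_cases hx : x ∈ S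
        · have hxr : r < ‖x‖ := by
            simpa [hSdef, Metric.mem_closedBall, dist_zero_right, not_le] using hx
          have hxR : R < ‖x‖ := lt_of_le_of_lt (le_max_left _ _) hxr
          have hx2 : (2:ℝ) < ‖x‖ := lt_of_le_of_lt (le_max_right _ _) hxr
          have ht4 : (4:ℝ) ≤ ‖x‖ ^ 2 := by nlinarith
          have hpt := pointB hε hε2 ht4 hC
          rw [Set.indicator_of_mem hx]
          have hc : 0 ≤ Real.cosh (ε⁻¹ * ‖x‖ ^ 2) - 1 := by
            linarith [Real.one_le_cosh (ε⁻¹ * ‖x‖ ^ 2)]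
          rw [if_pos hxR, ← ENNReal.ofReal_mul hc]
          refine ENNReal.ofReal_le_ofReal ?_
          simpa [gaussM, hCdef] using hpt
        · rw [Set.indicator_of_notMem hx]
          exact zero_le

theorem sq_norm_not_in_exponential_class (n : ℕ) (hn : 1 ≤ n) :
    MemLexp n (fun x => ‖x‖ ^ 2) ∧
    (∀ R > 0, ∀ ε : ℝ, 0 < ε → ε ≤ 2 →
      (∫⁻ x, ENNReal.ofReal
          (Real.cosh (ε⁻¹ * (if R < ‖x‖ then ‖x‖ ^ 2 else 0)) - 1) *
          ENNReal.ofReal (gaussM n x)) = ⊤) ∧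
    ¬ Tendsto (fun R : ℝ => luxNorm n (fun x => if R < ‖x‖ then ‖x‖ ^ 2 else 0))
        atTop (𝓝 0) := by
  obtain ⟨ρ, hρ0, hρle⟩ := partA n
  refine ⟨⟨ρ, hρ0, lt_of_le_of_lt hρle (by norm_num)⟩, partB n hn, ?_⟩
  intro htend
  have hlb : ∀ R : ℝ, 0 < R →
      (2:ℝ) ≤ luxNorm n (fun x => if R < ‖x‖ then ‖x‖ ^ 2 else 0) := by
    intro R hR
    have hmem : (1/ρ) ∈ {c : ℝ |
        0 < c ∧ orliczInt n (1/c) (fun x => if R < ‖x‖ then ‖x‖ ^ 2 else 0) ≤ 1} := by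
      refine ⟨by positivity, ?_⟩
      rw [one_div_one_div]
      refine le_trans ?_ hρle
      rw [orliczInt, orliczInt]
      refine lintegral_mono fun x => ?_
      refine mul_le_mul_left (ENNReal.ofReal_le_ofReal ?_) _
      have hite0 : (0:ℝ) ≤ (if R < ‖x‖ then ‖x‖ ^ 2 else 0) := by
        split_ifs <;> positivity
      have hitele : (if R < ‖x‖ then ‖x‖ ^ 2 else 0) ≤ ‖x‖ ^ 2 := by
        split_ifs
        · exact le_refl _
        · positivity
      have habs : |ρ * (if R < ‖x‖ then ‖x‖ ^ 2 else 0)| ≤ |ρ * ‖x‖ ^ 2| := by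
        rw [abs_of_nonneg (mul_nonneg hρ0.le hite0),
          abs_of_nonneg (by positivity)]
        exact mul_le_mul_of_nonneg_left hitele hρ0.le
      have := Real.cosh_le_cosh.2 habs
      linarith
    have h2le : ∀ c ∈ {c : ℝ |
        0 < c ∧ orliczInt n (1/c) (fun x => if R < ‖x‖ then ‖x‖ ^ 2 else 0) ≤ 1},
        (2:ℝ) ≤ c := by
      intro c hc
      by_contra hlt
      push_neg at hlt
      have hB := partB n hn R hR c hc.1 (le_of_lt hlt)
      have hle1 := hc.2
      simp only [orliczInt, one_div] at hle1
      rw [hB] at hle1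
      exact absurd hle1 (by norm_num)
    unfold luxNorm
    exact le_csInf ⟨_, hmem⟩ h2le
  have hev : ∀ᶠ R in atTop,
      luxNorm n (fun x => if R < ‖x‖ then ‖x‖ ^ 2 else 0) < 1 :=
    htend.eventually (gt_mem_nhds one_pos)
  obtain ⟨R, hR1, hR2⟩ := (hev.and (eventually_ge_atTop (1:ℝ))).exists
  have := hlb R (by linarith)
  linarith
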